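/- Let P ⊆ ℝ^d be a full-dimensional lattice polytope with codegree a. If P is IDP and P ∩ ℤ^d = (⌊aP⌋ ∩ ℤ^d) + ({P} ∩ ℤ^d), then P is nearly Gorenstein. -/

import Mathlib

open Set Pointwise

/-- The set of lattice points of `ℝ^d`. -/
def latticePoints (d : ℕ) : Set (Fin d → ℝ) :=
  {x | ∀ i, ∃ z : ℤ, x i = (z : ℝ)}

/-- A lattice polytope: the convex hull of a finite set of lattice points. -/
def IsLatticePolytope {d : ℕ} (P : Set (Fin d → ℝ)) : Prop :=
  ∃ V : Finset (Fin d → ℝ), (V : Set (Fin d → ℝ)) ⊆ latticePoints d ∧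
    P = convexHull ℝ (V : Set (Fin d → ℝ))

/-- The natural pairing of an integral linear functional with a point of `ℝ^d`. -/
def pairing {d : ℕ} (n : Fin d → ℤ) (x : Fin d → ℝ) : ℝ :=
  ∑ i, (n i : ℝ) * x i

/-- `P = {x | n_F(x) ≥ -h_F}` is an irredundant presentation with primitive
integral inner normals, i.e. the facet presentation of `P`. -/
def IsFacetPresentation {d m : ℕ} (P : Set (Fin d → ℝ))
    (n : Fin m → Fin d → ℤ) (h : Fin m → ℤ) : Prop :=
  P = {x | ∀ i, pairing (n i) x ≥ -(h i : ℝ)} ∧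
  (∀ i, Finset.univ.gcd (n i) = 1) ∧
  (∀ i, ∃ x : Fin d → ℝ, pairing (n i) x < -(h i : ℝ) ∧
    ∀ j, j ≠ i → pairing (n j) x ≥ -(h j : ℝ))

/-- `a` is the codegree of `P`: the least `k ≥ 1` such that `int(kP)` contains
a lattice point. -/
def IsCodegree {d : ℕ} (P : Set (Fin d → ℝ)) (a : ℕ) : Prop :=
  1 ≤ a ∧ (interior ((a : ℝ) • P) ∩ latticePoints d).Nonempty ∧
    ∀ k : ℕ, 1 ≤ k → (interior ((k : ℝ) • P) ∩ latticePoints d).Nonempty → a ≤ k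

/-- The floor polytope `⌊R⌋ = conv(int(R) ∩ ℤ^d)`. -/
def floorPoly {d : ℕ} (R : Set (Fin d → ℝ)) : Set (Fin d → ℝ) :=
  convexHull ℝ (interior R ∩ latticePoints d)

/-- The remainder polytope `{P} = conv{x ∈ ℤ^d | n_F(x) ≥ (a-1)h_F - 1}`,
defined in terms of the facet presentation data and the codegree `a`. -/
def remPoly {d m : ℕ} (n : Fin m → Fin d → ℤ) (h : Fin m → ℤ) (a : ℕ) :
    Set (Fin d → ℝ) :=
  convexHull ℝ {x | x ∈ latticePoints d ∧
    ∀ i, pairing (n i) x ≥ ((a : ℝ) - 1) * (h i : ℝ) - 1}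

/-- The cone `C_P ⊆ ℝ^d × ℝ` over `P`, in terms of the facet presentation. -/
def coneOver {d m : ℕ} (n : Fin m → Fin d → ℤ) (h : Fin m → ℤ) :
    Set ((Fin d → ℝ) × ℝ) :=
  {p | ∀ i, pairing (n i) p.1 ≥ -(p.2 * (h i : ℝ))}

/-- The interior `int(C_P)` of the cone over `P`. -/
def intCone {d m : ℕ} (n : Fin m → Fin d → ℤ) (h : Fin m → ℤ) :
    Set ((Fin d → ℝ) × ℝ) :=
  {p | ∀ i, pairing (n i) p.1 > -(p.2 * (h i : ℝ))}

/-- The anticanonical set `ant(C_P)` of the cone over `P`. -/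
def antCone {d m : ℕ} (n : Fin m → Fin d → ℤ) (h : Fin m → ℤ) :
    Set ((Fin d → ℝ) × ℝ) :=
  {p | ∀ i, pairing (n i) p.1 ≥ -(p.2 * (h i : ℝ)) - 1}

/-- Lattice points of `ℝ^d × ℝ = ℝ^{d+1}`. -/
def latticePairs (d : ℕ) : Set ((Fin d → ℝ) × ℝ) :=
  {p | p.1 ∈ latticePoints d ∧ ∃ z : ℤ, p.2 = (z : ℝ)}

/-- The nearly Gorenstein condition with respect to a given facet presentation:
`(C_P ∩ ℤ^{d+1}) \ {0} ⊆ (int(C_P) ∩ ℤ^{d+1}) + (ant(C_P) ∩ ℤ^{d+1})`. -/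
def NGIncl {d m : ℕ} (n : Fin m → Fin d → ℤ) (h : Fin m → ℤ) : Prop :=
  (coneOver n h ∩ latticePairs d) \ {(0 : (Fin d → ℝ) × ℝ)} ⊆
    (intCone n h ∩ latticePairs d) + (antCone n h ∩ latticePairs d)

/-- A full-dimensional lattice polytope is nearly Gorenstein if the nearly
Gorenstein inclusion holds for its facet presentation. -/
def NearlyGorenstein {d : ℕ} (P : Set (Fin d → ℝ)) : Prop :=
  ∃ (m : ℕ) (n : Fin m → Fin d → ℤ) (h : Fin m → ℤ),
    IsFacetPresentation P n h ∧ NGIncl n h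

/-- The polar dual `Q* = {y | y(x) ≥ -1 for all x ∈ Q}`. -/
def polarDual {d : ℕ} (Q : Set (Fin d → ℝ)) : Set (Fin d → ℝ) :=
  {y | ∀ x ∈ Q, (∑ i, y i * x i) ≥ -1}

/-- A reflexive polytope: a lattice polytope with `0` in its interior whose
polar dual is again a lattice polytope. -/
def IsReflexive {d : ℕ} (Q : Set (Fin d → ℝ)) : Prop :=
  IsLatticePolytope Q ∧ (0 : Fin d → ℝ) ∈ interior Q ∧
    IsLatticePolytope (polarDual Q)

/-- A Gorenstein polytope: some dilate `kP`, translated by a lattice vector,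
is reflexive. -/
def IsGorenstein {d : ℕ} (P : Set (Fin d → ℝ)) : Prop :=
  ∃ (k : ℕ) (w : Fin d → ℝ), 1 ≤ k ∧ w ∈ latticePoints d ∧
    IsReflexive ((fun x => x - w) '' ((k : ℝ) • P))

/-- The integer decomposition property. -/
def IsIDP {d : ℕ} (P : Set (Fin d → ℝ)) : Prop :=
  ∀ k : ℕ, 1 ≤ k → ∀ x ∈ ((k : ℝ) • P) ∩ latticePoints d,
    ∃ y : Fin k → Fin d → ℝ, (∀ j, y j ∈ P ∩ latticePoints d) ∧ x = ∑ j, y j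

/-- Minkowski indecomposability of a lattice polytope. -/
def IsIndecomposable {d : ℕ} (P : Set (Fin d → ℝ)) : Prop :=
  (¬ ∃ p : Fin d → ℝ, P = {p}) ∧
  ∀ P₁ P₂ : Set (Fin d → ℝ), IsLatticePolytope P₁ → IsLatticePolytope P₂ →
    P = P₁ + P₂ → (∃ p, P₁ = {p}) ∨ (∃ p, P₂ = {p})

/-- A `(0,1)`-polytope: the convex hull of a set of `(0,1)`-vectors. -/
def Is01Polytope {d : ℕ} (P : Set (Fin d → ℝ)) : Prop :=
  ∃ V : Finset (Fin d → ℝ), (∀ v ∈ V, ∀ i, v i = 0 ∨ v i = 1) ∧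
    P = convexHull ℝ (V : Set (Fin d → ℝ))


section Aux

variable {d m : ℕ}

lemma pairing_add (n : Fin d → ℤ) (x y : Fin d → ℝ) :
    pairing n (x + y) = pairing n x + pairing n y := by
  simp [pairing, mul_add, Finset.sum_add_distrib]

lemma pairing_sub (n : Fin d → ℤ) (x y : Fin d → ℝ) :
    pairing n (x - y) = pairing n x - pairing n y := by
  simp [pairing, mul_sub, Finset.sum_sub_distrib]

lemma pairing_smul (n : Fin d → ℤ) (t : ℝ) (x : Fin d → ℝ) :
    pairing n (t • x) = t * pairing n x := by
  simp only [pairing, Pi.smul_apply, smul_eq_mul, Finset.mul_sum]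
  exact Finset.sum_congr rfl fun i _ => by ring

lemma pairing_sum (n : Fin d → ℤ) {ι : Type*} (s : Finset ι) (y : ι → Fin d → ℝ) :
    pairing n (∑ j ∈ s, y j) = ∑ j ∈ s, pairing n (y j) := by
  simp only [pairing, Finset.sum_apply, Finset.mul_sum]
  exact Finset.sum_comm

lemma convex_ineqSet (n : Fin m → Fin d → ℤ) (c : Fin m → ℝ) :
    Convex ℝ {x : Fin d → ℝ | ∀ i, pairing (n i) x ≥ c i} := by
  intro x hx y hy s t hs ht hst
  intro i
  have he : pairing (n i) (s • x + t • y)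
      = s * pairing (n i) x + t * pairing (n i) y := by
    rw [pairing_add, pairing_smul, pairing_smul]
  rw [Set.mem_setOf_eq] at hx hy
  have h1 := mul_le_mul_of_nonneg_left (hx i) hs
  have h2 := mul_le_mul_of_nonneg_left (hy i) ht
  have h3 : s * c i + t * c i = c i := by rw [← add_mul, hst, one_mul]
  simp only [Set.mem_setOf_eq, he]
  linarith

lemma smul_ineqSet (n : Fin m → Fin d → ℤ) (c : Fin m → ℝ) {t : ℝ} (ht : 0 < t) :
    t • {x : Fin d → ℝ | ∀ i, pairing (n i) x ≥ c i}
      = {x : Fin d → ℝ | ∀ i, pairing (n i) x ≥ t * c i} := by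
  ext x
  constructor
  · rintro ⟨y, hy, rfl⟩ i
    rw [pairing_smul]
    exact mul_le_mul_of_nonneg_left (hy i) ht.le
  · intro hx
    refine ⟨t⁻¹ • x, fun i => ?_, ?_⟩
    · rw [pairing_smul]
      have h2 : t⁻¹ * (t * c i) ≤ t⁻¹ * pairing (n i) x :=
        mul_le_mul_of_nonneg_left (hx i) (inv_nonneg.mpr ht.le)
      rwa [← mul_assoc, inv_mul_cancel₀ ht.ne', one_mul] at h2
    · simp [smul_smul, mul_inv_cancel₀ ht.ne']

lemma nonzero_normal (hd : 1 ≤ d) {n : Fin d → ℤ} (hn : Finset.univ.gcd n = 1) :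
    ∃ j, n j ≠ 0 := by
  by_contra hc
  push_neg at hc
  have h0 : Finset.univ.gcd n = 0 := Finset.gcd_eq_zero_iff.mpr fun j _ => hc j
  rw [h0] at hn
  exact absurd hn (by norm_num)

lemma interior_strict (hd : 1 ≤ d) (n : Fin m → Fin d → ℤ)
    (hn : ∀ i, Finset.univ.gcd (n i) = 1) (c : Fin m → ℝ) {x : Fin d → ℝ}
    (hx : x ∈ interior {x : Fin d → ℝ | ∀ i, pairing (n i) x ≥ c i}) (i : Fin m) :
    pairing (n i) x > c i := by
  obtain ⟨j, hj⟩ := nonzero_normal hd (hn i)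
  set cv : Fin d → ℝ := fun j => (n i j : ℝ) with hcv
  have hs : 0 < ∑ j, ((n i j : ℝ)) * cv j := by
    apply Finset.sum_pos' (fun k _ => mul_self_nonneg _)
    exact ⟨j, Finset.mem_univ j, mul_self_pos.mpr (by exact_mod_cast hj)⟩
  obtain ⟨ε, hε, hball⟩ := Metric.mem_nhds_iff.mp (mem_interior_iff_mem_nhds.mp hx)
  set t : ℝ := ε / (2 * (‖cv‖ + 1)) with htdef
  have hcvpos : (0:ℝ) < ‖cv‖ + 1 := by positivity
  have ht : 0 < t := by positivity
  have hmem : x - t • cv ∈ Metric.ball x ε := by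
    rw [Metric.mem_ball, dist_eq_norm]
    have he : x - t • cv - x = -(t • cv) := by abel
    rw [he, norm_neg, norm_smul, Real.norm_eq_abs, abs_of_pos ht]
    have h1 : t * ‖cv‖ ≤ t * (‖cv‖ + 1) := by nlinarith [norm_nonneg cv]
    have h2 : t * (‖cv‖ + 1) = ε / 2 := by
      rw [htdef]
      field_simp
    nlinarith
  have hin := hball hmem i
  have heq : pairing (n i) (x - t • cv)
      = pairing (n i) x - t * (∑ j, ((n i j : ℝ)) * cv j) := by
    rw [pairing_sub, pairing_smul]
    rfl
  rw [heq] at hin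
  nlinarith [mul_pos ht hs]

lemma rec_zero (n : Fin m → Fin d → ℤ) (h : Fin m → ℤ)
    (R : ℝ)
    (hR : ∀ y ∈ {x : Fin d → ℝ | ∀ i, pairing (n i) x ≥ -(h i : ℝ)}, ‖y‖ ≤ R)
    (p : Fin d → ℝ) (hp : ∀ i, pairing (n i) p ≥ -(h i : ℝ))
    (q : Fin d → ℝ) (hq : ∀ i, pairing (n i) q ≥ 0) : q = 0 := by
  by_contra hne
  have hexj : ∃ j, q j ≠ 0 := by
    by_contra hc
    push_neg at hc
    exact hne (funext hc)
  obtain ⟨j, hj⟩ := hexj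
  have hRnn : 0 ≤ R := le_trans (norm_nonneg p) (hR p hp)
  set t : ℝ := (R + |p j| + 1) / |q j| with htdef
  have hqj : 0 < |q j| := abs_pos.mpr hj
  have ht : 0 < t := by positivity
  have hmem : p + t • q ∈ {x : Fin d → ℝ | ∀ i, pairing (n i) x ≥ -(h i : ℝ)} := by
    intro i
    rw [pairing_add, pairing_smul]
    nlinarith [mul_nonneg ht.le (hq i), hp i]
  have hb := hR _ hmem
  have hcoord : |(p + t • q) j| ≤ ‖p + t • q‖ := by
    have h4 := norm_le_pi_norm (p + t • q) j
    simpa using h4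
  have h1 : |t * q j| ≤ |p j| + |p j + t * q j| := by
    have h5 := abs_add_le (-(p j)) (p j + t * q j)
    rw [show -(p j) + (p j + t * q j) = t * q j by ring] at h5
    simpa using h5
  have h3 : |t * q j| = t * |q j| := by
    rw [abs_mul, abs_of_pos ht]
  have h4 : t * |q j| = R + |p j| + 1 := by
    rw [htdef]
    field_simp
  have h6 : (p + t • q) j = p j + t * q j := by simp
  rw [h6] at hcoord
  rw [h3, h4] at h1
  linarith [le_trans hcoord hb, h1]

end Aux

theorem stmt_4 {d : ℕ} (hd : 1 ≤ d) (P : Set (Fin d → ℝ))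
    (hP : IsLatticePolytope P) (hfull : (interior P).Nonempty)
    {m : ℕ} (n : Fin m → Fin d → ℤ) (h : Fin m → ℤ)
    (hpres : IsFacetPresentation P n h)
    (a : ℕ) (ha : IsCodegree P a)
    (hidp : IsIDP P)
    (hdec : P ∩ latticePoints d =
      (floorPoly ((a : ℝ) • P) ∩ latticePoints d) +
        (remPoly n h a ∩ latticePoints d)) :
    NGIncl n h := by
  classical
  obtain ⟨hPeq, hgcd, -⟩ := hpres
  set S : Set (Fin d → ℝ) := {x | ∀ i, pairing (n i) x ≥ -(h i : ℝ)} with hSdef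
  have hPS : P = S := hPeq
  rcases Nat.eq_zero_or_pos m with hm | hm
  · -- no facets: everything is trivial
    rintro ⟨X, K⟩ ⟨⟨-, hXlat⟩, -⟩
    refine ⟨(X, K), ⟨fun i => absurd i.isLt (by omega), hXlat⟩,
      (0, (0:ℝ)), ⟨fun i => absurd i.isLt (by omega), fun i => ⟨0, by simp⟩, ⟨0, by simp⟩⟩, by simp⟩
  -- boundedness of P
  obtain ⟨V, hVlat, hVP⟩ := hP
  have hPbdd : Bornology.IsBounded P := by
    rw [hVP]
    exact isBounded_convexHull.mpr V.finite_toSet.isBounded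
  obtain ⟨R, hR⟩ := isBounded_iff_forall_norm_le.mp hPbdd
  have hRS : ∀ y ∈ S, ‖y‖ ≤ R := fun y hy => hR y (hPS ▸ hy)
  -- interior point of P
  obtain ⟨p₀, hp₀⟩ := hfull
  have hp₀S : ∀ i, pairing (n i) p₀ > -(h i : ℝ) := by
    intro i
    have hint : p₀ ∈ interior S := hPS ▸ hp₀
    exact interior_strict hd n hgcd _ hint i
  have hp₀mem : ∀ i, pairing (n i) p₀ ≥ -(h i : ℝ) := fun i => le_of_lt (hp₀S i)
  obtain ⟨ha1, -, -⟩ := ha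
  -- main argument
  rintro ⟨X, K⟩ ⟨⟨hcone, hlat⟩, hne⟩
  have hcone' : ∀ i, pairing (n i) X ≥ -(K * (h i : ℝ)) := fun i => hcone i
  have hXlat : X ∈ latticePoints d := hlat.1
  obtain ⟨z, hKz⟩ := hlat.2
  have hKz' : K = (z : ℝ) := hKz
  simp only [Set.mem_singleton_iff] at hne
  -- Step 1 : z ≥ 1
  have hz1 : 1 ≤ z := by
    by_contra hzc
    push_neg at hzc
    have hz0 : z ≤ 0 := by omega
    rcases lt_or_eq_of_le hz0 with hzlt | hzeq
    · -- z < 0 : contradiction via recession cone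
      have hzr : (z : ℝ) < 0 := by exact_mod_cast hzlt
      set q : Fin d → ℝ := X + (-(z:ℝ)) • p₀ with hqdef
      have hqpos : ∀ i, pairing (n i) q > 0 := by
        intro i
        rw [hqdef, pairing_add, pairing_smul]
        have h1 := hcone' i
        rw [hKz'] at h1
        nlinarith [hp₀S i]
      have hq0 : q = 0 := rec_zero n h R hRS p₀ hp₀mem q fun i => (hqpos i).le
      have hbad := hqpos ⟨0, hm⟩
      rw [hq0] at hbad
      simp [pairing] at hbad
    · -- z = 0 : then X = 0, contradiction with (X,K) ≠ 0
      have hK0 : K = 0 := by rw [hKz', hzeq]; simp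
      have hX0 : X = 0 := by
        apply rec_zero n h R hRS p₀ hp₀mem
        intro i
        have h1 := hcone' i
        rw [hK0] at h1
        simpa using h1
      apply hne
      rw [Prod.ext_iff]
      exact ⟨hX0, hK0⟩
  set k : ℕ := z.toNat with hkdef
  have hk1 : 1 ≤ k := by omega
  have hkz : (k : ℝ) = K := by
    rw [hKz']
    exact_mod_cast Int.toNat_of_nonneg (by omega)
  have hkpos : (0:ℝ) < (k:ℝ) := by exact_mod_cast hk1
  -- X ∈ kP
  have hXkP : X ∈ ((k : ℝ) • P) ∩ latticePoints d := by
    refine ⟨?_, hXlat⟩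
    rw [hPS, hSdef, smul_ineqSet n _ hkpos]
    intro i
    have h1 := hcone' i
    rw [← hkz] at h1
    linarith [h1]
  obtain ⟨y, hy, hXsum⟩ := hidp k hk1 X hXkP
  -- decompose y j0
  set j0 : Fin k := ⟨0, by omega⟩ with hj0
  have hy0 : y j0 ∈ (floorPoly ((a : ℝ) • P) ∩ latticePoints d) +
      (remPoly n h a ∩ latticePoints d) := by
    rw [← hdec]; exact hy j0
  rw [Set.mem_add] at hy0
  obtain ⟨g, hg, r, hr, hgr⟩ := hy0
  -- properties of g
  have hapos : (0:ℝ) < (a:ℝ) := by exact_mod_cast ha1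
  have haS : (a : ℝ) • P
      = {x : Fin d → ℝ | ∀ i, pairing (n i) x ≥ (a:ℝ) * (-(h i : ℝ))} := by
    rw [hPS, hSdef]
    exact smul_ineqSet n _ hapos
  have hgint : g ∈ interior ((a : ℝ) • P) := by
    have hconv : Convex ℝ (interior ((a : ℝ) • P)) := by
      rw [haS]
      exact (convex_ineqSet n _).interior
    have hsub : floorPoly ((a : ℝ) • P) ⊆ interior ((a : ℝ) • P) :=
      convexHull_min Set.inter_subset_left hconv
    exact hsub hg.1
  have hgstrict : ∀ i, pairing (n i) g > (a:ℝ) * (-(h i : ℝ)) := by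
    intro i
    apply interior_strict hd n hgcd
    rw [← haS]
    exact hgint
  -- properties of r
  have hrineq : ∀ i, pairing (n i) r ≥ ((a : ℝ) - 1) * (h i : ℝ) - 1 := by
    have hsub : remPoly n h a ⊆
        {x : Fin d → ℝ | ∀ i, pairing (n i) x ≥ ((a : ℝ) - 1) * (h i : ℝ) - 1} := by
      apply convexHull_min _ (convex_ineqSet n _)
      rintro x ⟨-, hx⟩
      exact hx
    exact hsub hr.1
  -- y j properties
  have hymem : ∀ j : Fin k, ∀ i, pairing (n i) (y j) ≥ -(h i : ℝ) := by
    intro j i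
    have hyj := (hy j).1
    rw [hPS] at hyj
    exact hyj i
  -- define the decomposition
  refine ⟨((g, (a:ℝ)) : (Fin d → ℝ) × ℝ),
    ⟨fun i => ?_, hg.2, ⟨(a : ℤ), by push_cast; ring⟩⟩,
    ((X - g, K - (a:ℝ)) : (Fin d → ℝ) × ℝ),
    ⟨fun i => ?_, fun i => ?_, ⟨z - (a:ℤ), by push_cast [hKz']; ring⟩⟩, ?_⟩
  · -- intCone inequality
    show pairing (n i) g > -((a:ℝ) * (h i : ℝ))
    linarith [hgstrict i]
  · -- antCone inequality
    show pairing (n i) (X - g) ≥ -((K - (a:ℝ)) * (h i : ℝ)) - 1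
    have hXdec : pairing (n i) X
        = pairing (n i) (y j0) + ∑ j ∈ Finset.univ.erase j0, pairing (n i) (y j) := by
      rw [hXsum, pairing_sum, ← Finset.add_sum_erase _ _ (Finset.mem_univ j0)]
    have hy0dec : pairing (n i) (y j0) = pairing (n i) g + pairing (n i) r := by
      rw [← hgr, pairing_add]
    have hsumge : ∑ j ∈ Finset.univ.erase j0, (-(h i : ℝ))
        ≤ ∑ j ∈ Finset.univ.erase j0, pairing (n i) (y j) :=
      Finset.sum_le_sum fun j _ => hymem j i
    have hcard : (Finset.univ.erase j0).card = k - 1 := by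
      rw [Finset.card_erase_of_mem (Finset.mem_univ j0), Finset.card_univ, Fintype.card_fin]
    have hsumconst : ∑ j ∈ Finset.univ.erase j0, (-(h i : ℝ))
        = ((k:ℝ) - 1) * (-(h i : ℝ)) := by
      rw [Finset.sum_const, hcard, nsmul_eq_mul, Nat.cast_sub hk1, Nat.cast_one]
    rw [hsumconst] at hsumge
    have h1 : pairing (n i) (X - g)
        = pairing (n i) r + ∑ j ∈ Finset.univ.erase j0, pairing (n i) (y j) := by
      rw [pairing_sub, hXdec, hy0dec]
      ring
    rw [h1, ← hkz]
    linarith [hrineq i, hsumge]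
  · -- lattice points of X - g
    obtain ⟨zx, hzx⟩ := hXlat i
    obtain ⟨zg, hzg⟩ := hg.2 i
    exact ⟨zx - zg, by push_cast [Pi.sub_apply, hzx, hzg]; ring⟩
  · -- the sum
    show (g, (a:ℝ)) + (X - g, K - (a:ℝ)) = (X, K)
    rw [Prod.mk_add_mk, Prod.ext_iff]
    constructor
    · show g + (X - g) = X
      abel
    · show (a:ℝ) + (K - (a:ℝ)) = K
      ring
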